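/- arXiv:1106.2985 — 2 statements merged into one kernel-verified Lean document; each statement's English description precedes it below -/
import Mathlib

section
/- Let f ∈ L¹(ℝ;ℂ) satisfy ∫_ℝ f(t)·exp(iπτt) dt = 0 for all τ > 0. Then ∫_ℝ f(t)·exp(−iπξ/t) dt = 0 for all ξ > 0. -/
open MeasureTheory Real
open Set Filter

lemma realInt (n : ℕ) {c : ℝ} (hc : 0 < c) :
    IntegrableOn (fun τ : ℝ => τ ^ n * Real.exp (-(c * τ))) (Ioi 0) := by
  have h1 : IntegrableOn (fun x : ℝ => Real.exp (-x) * x ^ ((n + 1 : ℝ) - 1)) (Ioi 0) :=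
    Real.GammaIntegral_convergent (by positivity)
  have h2 : IntegrableOn (fun x : ℝ => Real.exp (-(c * x)) * (c * x) ^ ((n + 1 : ℝ) - 1))
      (Ioi 0) := by
    have := (integrableOn_Ioi_comp_mul_left_iff
      (fun x : ℝ => Real.exp (-x) * x ^ ((n + 1 : ℝ) - 1)) 0 hc).2 (by simpa using h1)
    simpa using this
  have h3 := h2.const_mul ((c : ℝ) ^ n)⁻¹
  apply (integrableOn_congr_fun ?_ measurableSet_Ioi).2 h3
  intro x hx
  simp only [mem_Ioi] at hx
  have hcx : (0:ℝ) ≤ c * x := by positivity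
  simp only [add_sub_cancel_right]
  rw [Real.rpow_natCast, mul_pow]
  field_simp

lemma cplxInt (n : ℕ) {s : ℂ} (hs : 0 < s.re) :
    IntegrableOn (fun τ : ℝ => (τ : ℂ) ^ n * Complex.exp (-(s * τ))) (Ioi 0) := by
  have hm : AEStronglyMeasurable (fun τ : ℝ => (τ : ℂ) ^ n * Complex.exp (-(s * τ)))
      (volume.restrict (Ioi 0)) := by
    apply Continuous.aestronglyMeasurable
    continuity
  refine Integrable.mono' (realInt n hs) hm ?_
  filter_upwards [ae_restrict_mem measurableSet_Ioi] with τ hτ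
  simp only [mem_Ioi] at hτ
  rw [norm_mul, Complex.norm_exp]
  simp only [Complex.neg_re, Complex.mul_re, Complex.ofReal_re, Complex.ofReal_im, mul_zero, sub_zero]
  rw [norm_pow, Complex.norm_real, Real.norm_eq_abs, abs_of_pos hτ]

lemma tendstoZero (k : ℕ) {s : ℂ} (hs : 0 < s.re) :
    Tendsto (fun τ : ℝ => (τ : ℂ) ^ k * Complex.exp (-(s * τ))) atTop (nhds 0) := by
  have hr : Tendsto (fun τ : ℝ => τ ^ k * Real.exp (-(s.re * τ))) atTop (nhds 0) := by
    have h1 : Tendsto (fun x : ℝ => s.re * x) atTop atTop :=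
      Tendsto.const_mul_atTop hs tendsto_id
    have h2 := (tendsto_pow_mul_exp_neg_atTop_nhds_zero k).comp h1
    have h3 := h2.const_mul ((s.re ^ k)⁻¹)
    rw [mul_zero] at h3
    apply h3.congr
    intro x
    simp only [Function.comp_apply, mul_pow]
    field_simp
  apply squeeze_zero_norm' _ hr
  filter_upwards [eventually_ge_atTop (0:ℝ)] with τ hτ
  rw [norm_mul, Complex.norm_exp]
  simp only [Complex.neg_re, Complex.mul_re, Complex.ofReal_re, Complex.ofReal_im, mul_zero, sub_zero]
  rw [norm_pow, Complex.norm_real, Real.norm_eq_abs, _root_.abs_of_nonneg hτ]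

lemma gammaInt : ∀ (n : ℕ) {s : ℂ}, 0 < s.re →
    ∫ τ : ℝ in Ioi 0, (τ : ℂ) ^ n * Complex.exp (-(s * τ)) = (n.factorial : ℂ) / s ^ (n + 1) := by
  intro n
  induction n with
  | zero =>
    intro s hs
    have hs0 : s ≠ 0 := fun h => by simp [h] at hs
    have hderiv : ∀ x ∈ Set.Ici (0:ℝ),
        HasDerivAt (fun τ : ℝ => -Complex.exp (-(s * τ)) / s)
          ((x:ℂ) ^ 0 * Complex.exp (-(s * x))) x := by
      intro x _
      have h1 : HasDerivAt (fun τ : ℝ => -(s * (τ:ℂ))) (-s) x := by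
        have := ((Complex.ofRealCLM.hasDerivAt (x := x)).const_mul s).neg
        simp at this
        exact this
      have h2 := h1.cexp
      have h3 := (h2.div_const s).neg
      exact (h3.congr_deriv (by rw [pow_zero, one_mul, mul_neg, neg_div, neg_neg, mul_div_assoc,
        div_self hs0, mul_one])).congr_of_eventuallyEq
        (Filter.Eventually.of_forall fun τ => by simp [neg_div])
    have := integral_Ioi_of_hasDerivAt_of_tendsto' hderiv
      ((cplxInt 0 hs).congr_fun (by intro x hx; norm_num) measurableSet_Ioi)
      (by simpa [neg_div] using ((tendstoZero 0 hs).div_const s).neg)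
    rw [show ∫ τ : ℝ in Ioi 0, (τ : ℂ) ^ 0 * Complex.exp (-(s * τ))
        = ∫ x : ℝ in Ioi 0, (x:ℂ) ^ 0 * Complex.exp (-(s * x)) from rfl, this]
    simp [hs0]
    field_simp
  | succ n ih =>
    intro s hs
    have hs0 : s ≠ 0 := fun h => by simp [h] at hs
    -- integration by parts: derivative of τ^(n+1) exp(-sτ)
    have hderiv : ∀ x ∈ Set.Ici (0:ℝ),
        HasDerivAt (fun τ : ℝ => (τ:ℂ) ^ (n+1) * Complex.exp (-(s * τ)))
          (((n:ℂ)+1) * (x:ℂ) ^ n * Complex.exp (-(s * x))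
            - s * ((x:ℂ) ^ (n+1) * Complex.exp (-(s * x)))) x := by
      intro x _
      have hr : HasDerivAt (fun τ : ℝ => ((τ:ℂ))) 1 x := Complex.ofRealCLM.hasDerivAt
      have hp : HasDerivAt (fun τ : ℝ => (τ:ℂ) ^ (n+1))
          (((n:ℂ)+1) * (x:ℂ) ^ n) x := by
        simpa using (hasDerivAt_pow (n+1) ((x:ℂ))).comp_ofReal
      have h1 : HasDerivAt (fun τ : ℝ => -(s * (τ:ℂ))) (-s) x := by
        have := ((Complex.ofRealCLM.hasDerivAt (x := x)).const_mul s).neg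
        simp at this
        exact this
      have h2 := h1.cexp
      have := hp.mul h2
      exact this.congr_deriv (by ring)
    have hint1 : IntegrableOn
        (fun x : ℝ => ((n:ℂ)+1) * (x:ℂ) ^ n * Complex.exp (-(s * x))) (Ioi 0) := by
      have := (cplxInt n hs).const_mul ((n:ℂ)+1)
      simp only [mul_assoc]
      exact this
    have hint2 : IntegrableOn
        (fun x : ℝ => s * ((x:ℂ) ^ (n+1) * Complex.exp (-(s * x)))) (Ioi 0) :=
      (cplxInt (n+1) hs).const_mul s
    have key := integral_Ioi_of_hasDerivAt_of_tendsto' hderiv (hint1.sub hint2)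
      (by simpa using tendstoZero (n+1) hs)
    rw [integral_sub hint1 hint2] at key
    simp only [Complex.ofReal_zero, ne_eq] at key
    have e1 : ∫ x : ℝ in Ioi 0, ((n:ℂ)+1) * (x:ℂ) ^ n * Complex.exp (-(s * x))
        = ((n:ℂ)+1) * ((n.factorial : ℂ) / s ^ (n+1)) := by
      rw [show (fun x : ℝ => ((n:ℂ)+1) * (x:ℂ) ^ n * Complex.exp (-(s * x)))
          = (fun x : ℝ => ((n:ℂ)+1) * ((x:ℂ) ^ n * Complex.exp (-(s * x)))) by
        funext x; ring]
      rw [integral_const_mul, ih hs]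
    have e2 : ∫ x : ℝ in Ioi 0, s * ((x:ℂ) ^ (n+1) * Complex.exp (-(s * x)))
        = s * ∫ x : ℝ in Ioi 0, (x:ℂ) ^ (n+1) * Complex.exp (-(s * x)) :=
      integral_const_mul s _
    rw [e1, e2] at key
    have hzero : ((0:ℂ)) ^ (n+1) * Complex.exp (-(s * (0:ℂ))) = 0 := by simp
    rw [hzero] at key
    -- key : (n+1) * (n!/s^(n+1)) - s * I = 0 - 0
    have : s * ∫ x : ℝ in Ioi 0, (x:ℂ) ^ (n+1) * Complex.exp (-(s * x))
        = ((n:ℂ)+1) * ((n.factorial : ℂ) / s ^ (n+1)) := by linear_combination -key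
    field_simp at this ⊢
    rw [Nat.factorial_succ]
    push_cast
    rw [pow_succ]
    linear_combination this

lemma keyIn (f : ℝ → ℂ) (hf : Integrable f)
    (hH' : ∀ τ : ℝ, 0 < τ →
      ∫ t : ℝ, f t * Complex.exp (Complex.I * ((τ * t : ℝ) : ℂ)) = 0)
    {ε : ℝ} (hε : 0 < ε) (n : ℕ) :
    ∫ t : ℝ, f t * (((t : ℂ) + ε * Complex.I)⁻¹) ^ (n + 1) = 0 := by
  set S : ℝ → ℂ := fun t => (ε : ℂ) - Complex.I * t with hS
  have hSre : ∀ t : ℝ, (S t).re = ε := by intro t; simp [hS]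
  have hSpos : ∀ t : ℝ, 0 < (S t).re := fun t => by rw [hSre]; exact hε
  have hznz : ∀ t : ℝ, ((t : ℂ) + ε * Complex.I) ≠ 0 := by
    intro t h
    have := congrArg Complex.im h
    simp at this
    exact hε.ne' this
  have hSz : ∀ t : ℝ, S t = -Complex.I * ((t : ℂ) + ε * Complex.I) := by
    intro t
    simp only [hS]
    linear_combination ((ε:ℂ)) * Complex.I_sq
  -- representation of the inverse power as a Gamma-type integral
  have hrep : ∀ t : ℝ, (((t : ℂ) + ε * Complex.I)⁻¹) ^ (n + 1)
      = (-Complex.I) ^ (n + 1) / (n.factorial : ℂ)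
        * ∫ τ : ℝ in Ioi 0, (τ : ℂ) ^ n * Complex.exp (-(S t * τ)) := by
    intro t
    rw [gammaInt n (hSpos t), hSz t, mul_pow]
    have hInz : (-Complex.I : ℂ) ^ (n + 1) ≠ 0 := by
      apply pow_ne_zero; simp [Complex.I_ne_zero]
    have hfac : (n.factorial : ℂ) ≠ 0 := by exact_mod_cast n.factorial_ne_zero
    field_simp
    rw [one_div_pow]
  -- the double integral, swapped
  have hmeas : AEStronglyMeasurable
      (fun p : ℝ × ℝ => f p.1 * ((p.2 : ℂ) ^ n * Complex.exp (-(S p.1 * p.2))))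
      (volume.prod (volume.restrict (Ioi 0))) := by
    apply AEStronglyMeasurable.mul (hf.aestronglyMeasurable.comp_fst)
    apply Continuous.aestronglyMeasurable
    apply Continuous.mul (by continuity)
    apply Complex.continuous_exp.comp
    have : Continuous fun p : ℝ × ℝ => S p.1 * (p.2 : ℂ) := by
      simp only [hS]; continuity
    exact this.neg
  have hbound : Integrable
      (fun p : ℝ × ℝ => ‖f p.1‖ * (|p.2| ^ n * Real.exp (-(ε * p.2))))
      (volume.prod (volume.restrict (Ioi 0))) := by
    have hg : Integrable (fun τ : ℝ => |τ| ^ n * Real.exp (-(ε * τ)))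
        (volume.restrict (Ioi 0)) := by
      apply (integrableOn_congr_fun ?_ measurableSet_Ioi).2 (realInt n hε)
      intro x hx
      simp only [mem_Ioi] at hx
      simp [abs_of_pos hx]
    exact hf.norm.mul_prod hg
  have hprodInt : Integrable
      (Function.uncurry fun t τ : ℝ => f t * ((τ : ℂ) ^ n * Complex.exp (-(S t * τ))))
      (volume.prod (volume.restrict (Ioi 0))) := by
    refine Integrable.mono' hbound hmeas ?_
    apply Filter.Eventually.of_forall
    rintro ⟨t, τ⟩
    simp only [Function.uncurry]
    rw [norm_mul, norm_mul, Complex.norm_exp]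
    have : (-(S t * (τ:ℂ))).re = -(ε * τ) := by
      simp [hS]
    rw [this, norm_pow, Complex.norm_real, Real.norm_eq_abs]
  have hswap := integral_integral_swap hprodInt
  -- inner integral vanishes for τ > 0
  have hinner : ∀ τ ∈ Ioi (0:ℝ),
      ∫ t : ℝ, f t * ((τ : ℂ) ^ n * Complex.exp (-(S t * τ))) = 0 := by
    intro τ hτ
    rw [mem_Ioi] at hτ
    have heq : ∀ t : ℝ, f t * ((τ : ℂ) ^ n * Complex.exp (-(S t * τ)))
        = ((τ : ℂ) ^ n * Complex.exp (-(ε * τ) : ℝ))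
          * (f t * Complex.exp (Complex.I * ((τ * t : ℝ) : ℂ))) := by
      intro t
      rw [show (-(S t * (τ:ℂ))) = ((-(ε * τ) : ℝ) : ℂ) + Complex.I * ((τ * t : ℝ) : ℂ) by
        push_cast; simp only [hS]; ring]
      rw [Complex.exp_add]
      ring
    simp_rw [heq]
    rw [integral_const_mul, hH' τ hτ, mul_zero]
  have houter : ∫ τ : ℝ in Ioi 0, (∫ t : ℝ, f t * ((τ : ℂ) ^ n * Complex.exp (-(S t * τ)))) = 0 := by
    rw [setIntegral_congr_fun measurableSet_Ioi hinner, integral_zero]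
  -- put everything together
  calc ∫ t : ℝ, f t * (((t : ℂ) + ε * Complex.I)⁻¹) ^ (n + 1)
      = ∫ t : ℝ, (-Complex.I) ^ (n + 1) / (n.factorial : ℂ)
          * (f t * ∫ τ : ℝ in Ioi 0, (τ : ℂ) ^ n * Complex.exp (-(S t * τ))) := by
        congr 1; funext t; rw [hrep t]; ring
    _ = (-Complex.I) ^ (n + 1) / (n.factorial : ℂ)
          * ∫ t : ℝ, (f t * ∫ τ : ℝ in Ioi 0, (τ : ℂ) ^ n * Complex.exp (-(S t * τ))) :=
        integral_const_mul _ _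
    _ = 0 := by
        rw [show (fun t : ℝ => f t * ∫ τ : ℝ in Ioi 0, (τ : ℂ) ^ n * Complex.exp (-(S t * τ)))
            = (fun t : ℝ => ∫ τ : ℝ in Ioi 0, f t * ((τ : ℂ) ^ n * Complex.exp (-(S t * τ))))
          from funext fun t => (integral_const_mul _ _).symm]
        rw [hswap, houter, mul_zero]

lemma expInt (f : ℝ → ℂ) (hf : Integrable f) (hf0 : ∫ t : ℝ, f t = 0)
    (hH' : ∀ τ : ℝ, 0 < τ →
      ∫ t : ℝ, f t * Complex.exp (Complex.I * ((τ * t : ℝ) : ℂ)) = 0)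
    {ε : ℝ} (hε : 0 < ε) {a : ℝ} (ha : 0 < a) :
    ∫ t : ℝ, f t * Complex.exp (-(Complex.I * a) * ((t : ℂ) + ε * Complex.I)⁻¹) = 0 := by
  set w : ℝ → ℂ := fun t => -(Complex.I * a) * ((t : ℂ) + ε * Complex.I)⁻¹ with hw
  have hznz : ∀ t : ℝ, ((t : ℂ) + ε * Complex.I) ≠ 0 := by
    intro t h
    have := congrArg Complex.im h
    simp at this
    exact hε.ne' this
  have hwnorm : ∀ t : ℝ, ‖w t‖ ≤ a / ε := by
    intro t
    rw [hw]
    simp only [norm_mul, norm_neg, norm_inv]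
    rw [Complex.norm_I, Complex.norm_real, Real.norm_eq_abs, abs_of_pos ha, one_mul]
    have him : ε ≤ ‖(t : ℂ) + ε * Complex.I‖ := by
      have h1 : ((t : ℂ) + ε * Complex.I).im = ε := by simp
      calc ε = |((t : ℂ) + ε * Complex.I).im| := by rw [h1, abs_of_pos hε]
        _ ≤ ‖(t : ℂ) + ε * Complex.I‖ := Complex.abs_im_le_norm _
    rw [div_eq_mul_inv]
    gcongr
  have hwcont : Continuous w := by
    rw [hw]
    exact continuous_const.mul ((Continuous.add (by continuity) continuous_const).inv₀ hznz)
  set F : ℕ → ℝ → ℂ := fun n t => f t * ((w t) ^ n / (n.factorial : ℂ)) with hF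
  have hFmeas : ∀ n, AEStronglyMeasurable (F n) volume := by
    intro n
    exact hf.aestronglyMeasurable.mul (((hwcont.pow n).div_const _).aestronglyMeasurable)
  have hFbound : ∀ n, ∀ t : ℝ, ‖F n t‖ ≤ (a / ε) ^ n / (n.factorial : ℝ) * ‖f t‖ := by
    intro n t
    rw [hF]
    simp only [norm_mul, norm_div]
    rw [Complex.norm_natCast]
    rw [mul_comm]
    gcongr
    rw [norm_pow]
    gcongr
    exact hwnorm t
  have hFint : ∀ n, Integrable (F n) := by
    intro n
    refine Integrable.mono' ((hf.norm.const_mul ((a / ε) ^ n / (n.factorial : ℝ))))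
      (hFmeas n) (Filter.Eventually.of_forall fun t => hFbound n t)
  have hFsum : Summable fun n => ∫ t : ℝ, ‖F n t‖ := by
    apply Summable.of_nonneg_of_le (fun n => integral_nonneg fun t => norm_nonneg _)
      (fun n => ?_) ((Real.summable_pow_div_factorial (a / ε)).mul_right (∫ t : ℝ, ‖f t‖))
    calc ∫ t : ℝ, ‖F n t‖ ≤ ∫ t : ℝ, (a / ε) ^ n / (n.factorial : ℝ) * ‖f t‖ :=
          integral_mono (hFint n).norm (hf.norm.const_mul _) (hFbound n)
      _ = (a / ε) ^ n / (n.factorial : ℝ) * ∫ t : ℝ, ‖f t‖ := integral_const_mul _ _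
  have hswap := integral_tsum_of_summable_integral_norm hFint hFsum
  have hexp : ∀ t : ℝ, ∑' n : ℕ, F n t = f t * Complex.exp (w t) := by
    intro t
    rw [hF]
    simp only
    rw [tsum_mul_left]
    congr 1
    rw [Complex.exp_eq_exp_ℂ, NormedSpace.exp_eq_tsum_div]
  have hterm : ∀ n : ℕ, ∫ t : ℝ, F n t = 0 := by
    intro n
    cases n with
    | zero => simpa [hF] using hf0
    | succ n =>
      have : ∀ t : ℝ, F (n+1) t
          = ((-(Complex.I * a)) ^ (n+1) / ((n+1).factorial : ℂ))
            * (f t * (((t : ℂ) + ε * Complex.I)⁻¹) ^ (n + 1)) := by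
        intro t
        rw [hF]
        simp only [hw, mul_pow]
        ring
      simp_rw [this]
      rw [integral_const_mul, keyIn f hf hH' hε n, mul_zero]
  have : ∑' n : ℕ, ∫ t : ℝ, F n t = 0 := by simp [hterm]
  rw [hswap] at this
  rw [← this]
  congr 1
  funext t
  rw [hexp t]


/-- If `f ∈ H¹₊(ℝ)`, i.e. `∫ f(t) e^{iπτt} dt = 0` for all `τ > 0`, then also
`∫ f(t) e^{−iπξ/t} dt = 0` for all `ξ > 0`, since `t ↦ e^{−iπξ/t}` lies in
`H^∞₊(ℝ)`. -/
theorem stmt18 (f : ℝ → ℂ) (hf : Integrable f)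
    (hH : ∀ τ : ℝ, 0 < τ →
      ∫ t : ℝ, f t * Complex.exp (Complex.I * ((π * τ * t : ℝ) : ℂ)) = 0) :
    ∀ ξ : ℝ, 0 < ξ →
      ∫ t : ℝ, f t * Complex.exp (-(Complex.I * ((π * ξ / t : ℝ) : ℂ))) = 0 := by
  intro ξ hξ
  set a : ℝ := π * ξ with haDef
  have ha : 0 < a := by positivity
  -- rescaled hypothesis
  have hH' : ∀ τ : ℝ, 0 < τ →
      ∫ t : ℝ, f t * Complex.exp (Complex.I * ((τ * t : ℝ) : ℂ)) = 0 := by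
    intro τ hτ
    have := hH (τ / π) (by positivity)
    have heq : ∀ t : ℝ, (π * (τ / π) * t : ℝ) = τ * t := by
      intro t
      field_simp
    simpa only [heq] using this
  -- the mean of f vanishes
  have hf0 : ∫ t : ℝ, f t = 0 := by
    have hk : ∀ k : ℕ, ∫ t : ℝ,
        f t * Complex.exp (Complex.I * (((1 / (k + 1)) * t : ℝ) : ℂ)) = 0 :=
      fun k => hH' _ (by positivity)
    have htend : Filter.Tendsto
        (fun k : ℕ => ∫ t : ℝ, f t * Complex.exp (Complex.I * (((1 / (k + 1)) * t : ℝ) : ℂ)))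
        Filter.atTop (nhds (∫ t : ℝ, f t)) := by
      apply tendsto_integral_of_dominated_convergence (fun t => ‖f t‖)
      · intro k
        apply hf.aestronglyMeasurable.mul
        apply Continuous.aestronglyMeasurable
        continuity
      · exact hf.norm
      · intro k
        apply Filter.Eventually.of_forall
        intro t
        rw [norm_mul]
        have : ‖Complex.exp (Complex.I * (((1 / (k + 1)) * t : ℝ) : ℂ))‖ = 1 := by
          rw [Complex.norm_exp]
          simp [Complex.mul_re]
        rw [this, mul_one]
      · apply Filter.Eventually.of_forall
        intro t
        have h1 : Filter.Tendsto (fun k : ℕ => ((1 : ℝ) / (k + 1)) * t)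
            Filter.atTop (nhds 0) := by
          simpa using (tendsto_one_div_add_atTop_nhds_zero_nat).mul_const t
        have h2 : Filter.Tendsto
            (fun k : ℕ => Complex.exp (Complex.I * (((1 / (k + 1)) * t : ℝ) : ℂ)))
            Filter.atTop (nhds 1) := by
          have h3 : Filter.Tendsto (fun k : ℕ => Complex.I * (((1 / (k + 1)) * t : ℝ) : ℂ))
              Filter.atTop (nhds 0) := by
            have := (Complex.continuous_ofReal.tendsto 0).comp h1
            simpa using (this.const_mul Complex.I)
          have := (Complex.continuous_exp.tendsto 0).comp h3
          rw [Complex.exp_zero] at this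
          exact this
        simpa using tendsto_const_nhds.mul h2
    exact tendsto_nhds_unique (Filter.Tendsto.congr (fun k => hk k) htend) tendsto_const_nhds
  have heps : ∀ ε : ℝ, 0 < ε →
      ∫ t : ℝ, f t * Complex.exp (-(Complex.I * a) * ((t : ℂ) + ε * Complex.I)⁻¹) = 0 :=
    fun ε hε => expInt f hf hf0 hH' hε ha
  have hae : ∀ᵐ t : ℝ, t ≠ (0:ℝ) := by
    refine ae_iff.mpr ?_
    simp only [not_not, Set.setOf_eq_eq_singleton]
    exact measure_singleton 0
  have hknz : ∀ k : ℕ, (0:ℝ) < 1 / (k + 1) := fun k => by positivity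
  have hzknz : ∀ (k : ℕ) (t : ℝ), ((t : ℂ) + (1 / (k + 1) : ℝ) * Complex.I) ≠ 0 := by
    have hgen : ∀ (ε : ℝ), 0 < ε → ∀ t : ℝ, ((t : ℂ) + ε * Complex.I) ≠ 0 := by
      intro ε hε t h
      have := congrArg Complex.im h
      simp at this
      exact hε.ne' this
    exact fun k t => hgen _ (hknz k) t
  have hexpbd : ∀ (ε : ℝ), 0 < ε → ∀ t : ℝ,
      ‖Complex.exp (-(Complex.I * a) * ((t : ℂ) + ε * Complex.I)⁻¹)‖ ≤ 1 := by
    intro ε hε t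
    have hre : (-(Complex.I * a) * ((t : ℂ) + ε * Complex.I)⁻¹).re ≤ 0 := by
      set z : ℂ := (t : ℂ) + ε * Complex.I with hz
      have him : z.im = ε := by simp [hz]
      have h1 : (-(Complex.I * a) * z⁻¹).re = a * (z⁻¹).im := by
        simp [Complex.mul_re]
      rw [h1, Complex.inv_im, him]
      have h2 : -ε / Complex.normSq z ≤ 0 :=
        div_nonpos_of_nonpos_of_nonneg (by linarith) (Complex.normSq_nonneg z)
      calc a * (-ε / Complex.normSq z) ≤ a * 0 := mul_le_mul_of_nonneg_left h2 ha.le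
        _ = 0 := mul_zero a
    rw [Complex.norm_exp]
    calc Real.exp _ ≤ Real.exp 0 := Real.exp_le_exp.2 hre
      _ = 1 := Real.exp_zero
  have hGtend : Filter.Tendsto (fun k : ℕ =>
      ∫ t : ℝ, f t * Complex.exp (-(Complex.I * a) * ((t : ℂ) + (1 / (k + 1) : ℝ) * Complex.I)⁻¹))
      Filter.atTop
      (nhds (∫ t : ℝ, f t * Complex.exp (-(Complex.I * ((π * ξ / t : ℝ) : ℂ))))) := by
    apply tendsto_integral_of_dominated_convergence (fun t => ‖f t‖)
    · intro k
      apply hf.aestronglyMeasurable.mul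
      apply Continuous.aestronglyMeasurable
      apply Complex.continuous_exp.comp
      exact (continuous_const.mul
        ((Continuous.add (by continuity) continuous_const).inv₀ (hzknz k)))
    · exact hf.norm
    · intro k
      apply Filter.Eventually.of_forall
      intro t
      rw [norm_mul]
      have := hexpbd _ (hknz k) t
      calc ‖f t‖ * ‖Complex.exp _‖ ≤ ‖f t‖ * 1 :=
            mul_le_mul_of_nonneg_left this (norm_nonneg _)
        _ = ‖f t‖ := mul_one _
    · filter_upwards [hae] with t ht
      have htc : ((t : ℂ)) ≠ 0 := by exact_mod_cast ht
      have h1 : Filter.Tendsto (fun k : ℕ => ((t : ℂ) + (1 / (k + 1) : ℝ) * Complex.I))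
          Filter.atTop (nhds ((t : ℂ))) := by
        have h0 : Filter.Tendsto (fun k : ℕ => ((1 / (k + 1) : ℝ) : ℂ))
            Filter.atTop (nhds 0) := by
          have := (Complex.continuous_ofReal.tendsto 0).comp
            tendsto_one_div_add_atTop_nhds_zero_nat
          simpa [Function.comp_def, one_div] using this
        have := (tendsto_const_nhds (x := (t:ℂ)) (f := Filter.atTop (α := ℕ))).add
          (h0.mul_const Complex.I)
        simpa using this
      have h2 := ((h1.inv₀ htc).const_mul (-(Complex.I * a)))
      have h3 := (Complex.continuous_exp.tendsto _).comp h2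
      have h4 := tendsto_const_nhds (x := f t) (f := Filter.atTop (α := ℕ)) |>.mul h3
      simp only [Function.comp_def] at h4
      convert h4 using 2
      rw [show ((π * ξ / t : ℝ) : ℂ) = (a : ℂ) / (t : ℂ) by push_cast [haDef]; ring]
      rw [div_eq_mul_inv]
      ring
  have hzero : ∀ k : ℕ,
      ∫ t : ℝ, f t * Complex.exp (-(Complex.I * a)
        * ((t : ℂ) + (1 / (k + 1) : ℝ) * Complex.I)⁻¹) = 0 :=
    fun k => heps _ (hknz k)
  exact tendsto_nhds_unique (Filter.Tendsto.congr (fun k => hzero k) hGtend) tendsto_const_nhds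
end

section
/- Let g : ℂ → ℂ be holomorphic on ℂ∖{0} (i.e. differentiable at every nonzero point), and suppose there is a constant C ≥ 0 such that |g(z)| ≤ C·|z|/|Im z| for every z ∈ ℂ with Im z ≠ 0. Then g is constant on ℂ∖{0}: g(z) = g(w) for all nonzero z, w. -/
open Complex Set Metric Real


lemma derivBound (g : ℂ → ℂ) (hol : ∀ z : ℂ, z ≠ 0 → DifferentiableAt ℂ g z)
    (C : ℝ) (hC : 0 ≤ C)
    (hbd : ∀ z : ℂ, |z.im| * ‖g z‖ ≤ C * ‖z‖)
    (z₀ : ℂ) (hz₀ : z₀ ≠ 0) : ‖deriv g z₀‖ ≤ 20 * C / ‖z₀‖ := by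
  have habs0 : 0 < ‖z₀‖ := by simpa [norm_pos_iff] using hz₀
  set r : ℝ := ‖z₀‖ / 2 with hr_def
  have hr : 0 < r := by positivity
  have hrC : ((r : ℝ) : ℂ) ≠ 0 := by exact_mod_cast hr.ne'
  have hball : ∀ z ∈ closedBall z₀ r, z ≠ 0 := by
    intro z hz h0
    rw [mem_closedBall, Complex.dist_eq, h0, zero_sub, norm_neg] at hz
    linarith
  have hdOn : DifferentiableOn ℂ g (closedBall z₀ r) :=
    fun z hz => (hol z (hball z hz)).differentiableWithinAt
  have hdc : DiffContOnCl ℂ g (ball z₀ r) :=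
    (hdOn.mono closure_ball_subset_closedBall).diffContOnCl
  have hsph : ∀ z ∈ sphere z₀ r, ‖z - z₀‖ = r := by
    intro z hz; rwa [mem_sphere, Complex.dist_eq] at hz
  have hne : ∀ z ∈ sphere z₀ r, z - z₀ ≠ 0 := by
    intro z hz h
    have := hsph z hz
    rw [h, norm_zero] at this
    exact hr.ne this
  have hcg : ContinuousOn g (sphere z₀ r) := fun z hz =>
    ((hol z (hball z (sphere_subset_closedBall hz))).continuousAt).continuousWithinAt
  set f₂ : ℂ → ℂ := fun z => (z - z₀)⁻¹ * ((z.im : ℂ) * g z) with hf₂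
  set f₃ : ℂ → ℂ := fun z => (z - z₀)⁻¹ * g z with hf₃
  have hinv : ContinuousOn (fun z : ℂ => (z - z₀)⁻¹) (sphere z₀ r) :=
    ((continuous_id.sub continuous_const).continuousOn).inv₀ hne
  have him : Continuous fun z : ℂ => (z.im : ℂ) :=
    Complex.continuous_ofReal.comp Complex.continuous_im
  have hc2 : ContinuousOn f₂ (sphere z₀ r) := hinv.mul (him.continuousOn.mul hcg)
  have hc3 : ContinuousOn f₃ (sphere z₀ r) := hinv.mul hcg
  -- pointwise identity on the sphere
  have key : EqOn (fun z => (z - z₀) ^ (-2 : ℤ) • g z)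
      (fun z => (-(2 * I / ((r : ℝ) : ℂ) ^ 2)) * f₂ z
        + (2 * I * (z₀.im : ℂ) / ((r : ℝ) : ℂ) ^ 2) * f₃ z
        + (((r : ℝ) : ℂ) ^ 2)⁻¹ * g z) (sphere z₀ r) := by
    intro z hz
    have hw : z - z₀ ≠ 0 := hne z hz
    have hmc : (z - z₀) * (starRingEnd ℂ) (z - z₀) = ((r : ℝ) : ℂ) ^ 2 := by
      rw [Complex.mul_conj, Complex.normSq_eq_norm_sq, hsph z hz]
      norm_cast
    have hconj : (starRingEnd ℂ) (z - z₀)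
        = (z - z₀) - ((2 * (z.im - z₀.im) : ℝ) : ℂ) * I := by
      have h := Complex.sub_conj (z - z₀)
      rw [Complex.sub_im] at h
      linear_combination -h
    have e1 : (z - z₀) ^ (-2 : ℤ) = (z - z₀)⁻¹ * (z - z₀)⁻¹ := by
      rw [zpow_neg, ← mul_inv]
      norm_cast
      rw [sq]
    show (z - z₀) ^ (-2 : ℤ) • g z = _
    simp only [hf₂, hf₃, smul_eq_mul]
    rw [e1]
    have hww : (z - z₀)⁻¹ * (z - z₀) = 1 := inv_mul_cancel₀ hw
    have e2' : (z - z₀)⁻¹ * ((r : ℝ) : ℂ) ^ 2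
        = (z - z₀) - (2 * ((z.im : ℂ) - (z₀.im : ℂ))) * I := by
      rw [← hmc, ← mul_assoc, inv_mul_cancel₀ hw, one_mul, hconj]
      push_cast
      ring
    have hr1 : ((r : ℝ) : ℂ) ^ 2 * (((r : ℝ) : ℂ) ^ 2)⁻¹ = 1 :=
      mul_inv_cancel₀ (pow_ne_zero 2 hrC)
    linear_combination (g z / ((r : ℝ) : ℂ) ^ 2) * hww
      + ((z - z₀)⁻¹ * g z / ((r : ℝ) : ℂ) ^ 2) * e2'
      - ((z - z₀)⁻¹ * (z - z₀)⁻¹ * g z) * hr1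
  -- split the circle integral
  have pull : ∀ (a : ℂ) (f : ℂ → ℂ),
      (∮ z in C(z₀, r), a * f z) = a * ∮ z in C(z₀, r), f z := by
    intro a f
    simpa [smul_eq_mul] using circleIntegral.integral_smul a f z₀ r
  have integral_add' : ∀ {f₁ g₁ : ℂ → ℂ}, CircleIntegrable f₁ z₀ r → CircleIntegrable g₁ z₀ r →
      (∮ z in C(z₀, r), (f₁ z + g₁ z)) = (∮ z in C(z₀, r), f₁ z) + ∮ z in C(z₀, r), g₁ z := by
    intro f₁ g₁ hf₁ hg₁
    simp only [circleIntegral, smul_add, intervalIntegral.integral_add hf₁.out hg₁.out]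
  have hi2 : CircleIntegrable (fun z => (-(2 * I / ((r : ℝ) : ℂ) ^ 2)) * f₂ z) z₀ r :=
    (continuousOn_const.mul hc2).circleIntegrable hr.le
  have hi3 : CircleIntegrable (fun z => (2 * I * (z₀.im : ℂ) / ((r : ℝ) : ℂ) ^ 2) * f₃ z) z₀ r :=
    (continuousOn_const.mul hc3).circleIntegrable hr.le
  have hig : CircleIntegrable (fun z => ((((r : ℝ) : ℂ)) ^ 2)⁻¹ * g z) z₀ r :=
    (continuousOn_const.mul hcg).circleIntegrable hr.le
  have hi23 : CircleIntegrable (fun z => (-(2 * I / ((r : ℝ) : ℂ) ^ 2)) * f₂ z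
      + (2 * I * (z₀.im : ℂ) / ((r : ℝ) : ℂ) ^ 2) * f₃ z) z₀ r :=
    ((continuousOn_const.mul hc2).add (continuousOn_const.mul hc3)).circleIntegrable hr.le
  have hg0 : (∮ z in C(z₀, r), g z) = 0 :=
    Complex.circleIntegral_eq_zero_of_differentiable_on_off_countable hr.le countable_empty
      hdOn.continuousOn
      (fun z hz => hol z (hball z (ball_subset_closedBall hz.1)))
  have hg3 : (∮ z in C(z₀, r), f₃ z) = 2 * Real.pi * I * g z₀ := by
    have := hdc.circleIntegral_sub_inv_smul (mem_ball_self hr)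
    simpa [hf₃, smul_eq_mul] using this
  have hsplit : (∮ z in C(z₀, r), (z - z₀) ^ (-2 : ℤ) • g z)
      = (-(2 * I / ((r : ℝ) : ℂ) ^ 2)) * (∮ z in C(z₀, r), f₂ z)
        + (2 * I * (z₀.im : ℂ) / ((r : ℝ) : ℂ) ^ 2) * (2 * Real.pi * I * g z₀) := by
    rw [circleIntegral.integral_congr hr.le key,
      integral_add' hi23 hig, integral_add' hi2 hi3, pull, pull, pull, hg0, hg3]
    ring
  -- bound on the middle integral
  have habs_z : ∀ z ∈ sphere z₀ r, ‖z‖ ≤ ‖z₀‖ + r := by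
    intro z hz
    calc ‖z‖ = ‖z₀ + (z - z₀)‖ := by rw [show z₀ + (z - z₀) = z by ring]
    _ ≤ ‖z₀‖ + ‖z - z₀‖ := norm_add_le _ _
    _ = ‖z₀‖ + r := by rw [hsph z hz]
  have hJ2 : ‖∮ z in C(z₀, r), f₂ z‖ ≤ 2 * Real.pi * r * (C * (‖z₀‖ + r) / r) := by
    refine circleIntegral.norm_integral_le_of_norm_le_const hr.le ?_
    intro z hz
    have h1 : ‖f₂ z‖ = r⁻¹ * (|z.im| * ‖g z‖) := by
      simp only [hf₂, norm_mul, norm_inv, hsph z hz,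
        Complex.norm_real, Real.norm_eq_abs]
    rw [h1, div_eq_mul_inv, mul_comm (C * (‖z₀‖ + r)) r⁻¹]
    refine mul_le_mul_of_nonneg_left ?_ (by positivity)
    exact (hbd z).trans (by nlinarith [habs_z z hz, hC])
  -- assemble
  have hde : deriv g z₀ = (2 * Real.pi * I : ℂ)⁻¹ •
      ((-(2 * I / ((r : ℝ) : ℂ) ^ 2)) * (∮ z in C(z₀, r), f₂ z)
        + (2 * I * (z₀.im : ℂ) / ((r : ℝ) : ℂ) ^ 2) * (2 * Real.pi * I * g z₀)) := by
    have hD := hdc.deriv_eq_smul_circleIntegral hr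
    have hint : (fun z => (1 / (z - z₀) ^ 2) • g z) = fun z => (z - z₀) ^ (-2 : ℤ) • g z := by
      funext z; rw [zpow_neg, one_div]; norm_cast
    rw [hint] at hD
    rw [← hsplit, hD, smul_smul, inv_mul_cancel₀ (by simp [Real.pi_ne_zero, Complex.I_ne_zero]),
      one_smul]
  have hpi : (Real.pi : ℝ) ≠ 0 := Real.pi_ne_zero
  set a : ℝ := -(1 / (Real.pi * r ^ 2)) with ha_def
  have hde2 : deriv g z₀ = ((a : ℝ) : ℂ) * (∮ z in C(z₀, r), f₂ z)
      + (2 * I * (z₀.im : ℂ) / ((r : ℝ) : ℂ) ^ 2) * g z₀ := by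
    have h2πI : (2 * ((Real.pi : ℝ) : ℂ) * I) ≠ 0 := by
      simp [Real.pi_ne_zero, Complex.I_ne_zero]
    rw [hde, smul_eq_mul, inv_mul_eq_iff_eq_mul₀ h2πI]
    have hπC : ((Real.pi : ℝ) : ℂ) ≠ 0 := by exact_mod_cast hpi
    rw [ha_def]
    push_cast
    field_simp
  have hnorm1 : ‖((a : ℝ) : ℂ) * (∮ z in C(z₀, r), f₂ z)‖
      ≤ (Real.pi * r ^ 2)⁻¹ * (2 * Real.pi * r * (C * (‖z₀‖ + r) / r)) := by
    have hav : ‖((a : ℝ) : ℂ)‖ = (Real.pi * r ^ 2)⁻¹ := by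
      rw [Complex.norm_real, Real.norm_eq_abs, ha_def, abs_neg, abs_of_pos (by positivity),
        one_div]
    rw [norm_mul, hav]
    exact mul_le_mul_of_nonneg_left hJ2 (by positivity)
  have hnorm2 : ‖(2 * I * (z₀.im : ℂ) / ((r : ℝ) : ℂ) ^ 2) * g z₀‖
      ≤ (r ^ 2)⁻¹ * (2 * (C * ‖z₀‖)) := by
    have : ‖(2 * I * (z₀.im : ℂ) / ((r : ℝ) : ℂ) ^ 2) * g z₀‖
        = (r ^ 2)⁻¹ * (2 * (|z₀.im| * ‖g z₀‖)) := by
      simp only [norm_mul, norm_div, norm_pow, Complex.norm_I,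
        Complex.norm_real, Real.norm_eq_abs, Complex.norm_two, abs_of_pos hr]
      ring
    rw [this]
    refine mul_le_mul_of_nonneg_left ?_ (by positivity)
    exact mul_le_mul_of_nonneg_left (hbd z₀) (by norm_num)
  calc ‖deriv g z₀‖ ≤ (Real.pi * r ^ 2)⁻¹ * (2 * Real.pi * r * (C * (‖z₀‖ + r) / r))
        + (r ^ 2)⁻¹ * (2 * (C * ‖z₀‖)) := by
        rw [hde2]
        exact (norm_add_le _ _).trans (add_le_add hnorm1 hnorm2)
    _ = 20 * C / ‖z₀‖ := by
        rw [hr_def]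
        field_simp
        ring

lemma constOnConvex (g : ℂ → ℂ) (hol : ∀ z : ℂ, z ≠ 0 → DifferentiableAt ℂ g z)
    (hder : ∀ z : ℂ, z ≠ 0 → deriv g z = 0) {s : Set ℂ} (hs : Convex ℝ s) (h0 : (0 : ℂ) ∉ s)
    {x y : ℂ} (hx : x ∈ s) (hy : y ∈ s) : g x = g y := by
  have h := hs.norm_image_sub_le_of_norm_hasDerivWithin_le (f := g) (f' := fun _ => (0 : ℂ))
    (C := 0)
    (fun z hz => by
      have hz0 : z ≠ 0 := fun h => h0 (h ▸ hz)
      have h1 := (hol z hz0).hasDerivAt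
      rw [hder z hz0] at h1
      exact h1.hasDerivWithinAt)
    (fun z _ => by simp) hy hx
  rw [zero_mul] at h
  have := norm_le_zero_iff.mp h
  exact sub_eq_zero.mp this

/-- Function-theoretic core (log-log theorem consequence): a function
holomorphic on `ℂ ∖ {0}` satisfying `|g(z)| ≤ C|z|/|Im z|` off the real axis
must be constant on `ℂ ∖ {0}`. -/
theorem stmt19 (g : ℂ → ℂ) (hol : ∀ z : ℂ, z ≠ 0 → DifferentiableAt ℂ g z)
    (C : ℝ) (hC : 0 ≤ C)
    (hbd : ∀ z : ℂ, z.im ≠ 0 → ‖g z‖ ≤ C * ‖z‖ / |z.im|) :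
    ∀ z w : ℂ, z ≠ 0 → w ≠ 0 → g z = g w := by
  -- uniform bound |im z| * |g z| ≤ C * |z|
  have hbd' : ∀ z : ℂ, |z.im| * ‖g z‖ ≤ C * ‖z‖ := by
    intro z
    rcases eq_or_ne z.im 0 with h | h
    · rw [h, abs_zero, zero_mul]; positivity
    · have h1 := hbd z h
      have h2 : 0 < |z.im| := abs_pos.mpr h
      rw [div_eq_mul_inv] at h1
      calc |z.im| * ‖g z‖ ≤ |z.im| * (C * ‖z‖ * |z.im|⁻¹) :=
            mul_le_mul_of_nonneg_left h1 (abs_nonneg _)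
        _ = C * ‖z‖ := by field_simp
  have hkey := derivBound g hol C hC hbd'
  -- `z * deriv g z` is differentiable on `ℂ ∖ {0}` and bounded
  have hgdo : DifferentiableOn ℂ g {(0 : ℂ)}ᶜ := fun z hz => (hol z hz).differentiableWithinAt
  have hgan : AnalyticOnNhd ℂ g {(0 : ℂ)}ᶜ := hgdo.analyticOnNhd isOpen_compl_singleton
  have hdan : AnalyticOnNhd ℂ (deriv g) {(0 : ℂ)}ᶜ := hgan.deriv
  set h : ℂ → ℂ := fun z => z * deriv g z with hh_def
  have hdiffh : ∀ z : ℂ, z ≠ 0 → DifferentiableAt ℂ h z := fun z hz =>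
    differentiableAt_id.mul (hdan z hz).differentiableAt
  have hboundh : ∀ z : ℂ, z ≠ 0 → ‖h z‖ ≤ 20 * C := by
    intro z hz
    have habs0 : 0 < ‖z‖ := by simpa [norm_pos_iff] using hz
    have : ‖h z‖ = ‖z‖ * ‖deriv g z‖ := by
      simp [hh_def]
    rw [this]
    calc ‖z‖ * ‖deriv g z‖ ≤ ‖z‖ * (20 * C / ‖z‖) :=
          mul_le_mul_of_nonneg_left (hkey z hz) habs0.le
      _ = 20 * C := by field_simp
  -- removable singularity and Liouville
  set H : ℂ → ℂ := Function.update h 0 ((nhdsWithin 0 {(0 : ℂ)}ᶜ).limUnder h) with hH_def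
  have hHdiff : Differentiable ℂ H := by
    rw [← differentiableOn_univ]
    refine Complex.differentiableOn_update_limUnder_of_bddAbove (Filter.univ_mem) ?_ ?_
    · intro z hz
      exact (hdiffh z (by simpa using hz.2)).differentiableWithinAt
    · refine ⟨20 * C, ?_⟩
      rintro x ⟨z, hz, rfl⟩
      exact hboundh z (by simpa using hz.2)
  have hHh : ∀ z : ℂ, z ≠ 0 → H z = h z := fun z hz => Function.update_of_ne hz _ _
  have hHbound : ∀ z : ℂ, ‖H z‖ ≤ 20 * C := by
    intro z
    rcases eq_or_ne z 0 with rfl | hz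
    · have ht : Filter.Tendsto H (nhdsWithin 0 {(0 : ℂ)}ᶜ) (nhds (H 0)) :=
        ((hHdiff.continuous.tendsto 0).mono_left nhdsWithin_le_nhds)
      refine le_of_tendsto ht.norm ?_
      refine Filter.eventually_iff_exists_mem.mpr ⟨{(0 : ℂ)}ᶜ, self_mem_nhdsWithin, ?_⟩
      intro z hz
      rw [hHh z (by simpa using hz)]
      exact hboundh z (by simpa using hz)
    · rw [hHh z hz]; exact hboundh z hz
  have hHconst : ∀ z : ℂ, H z = H 0 := by
    intro z
    refine hHdiff.apply_eq_apply_of_bounded ?_ z 0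
    refine isBounded_iff_forall_norm_le.mpr ⟨20 * C, ?_⟩
    rintro x ⟨z, rfl⟩
    exact hHbound z
  set c : ℂ := H 0 with hc_def
  have hderiv_eq : ∀ z : ℂ, z ≠ 0 → deriv g z = c * z⁻¹ := by
    intro z hz
    have h1 : z * deriv g z = c := by
      have h2 := hHconst z
      rw [hHh z hz] at h2
      exact h2
    rw [← h1, mul_comm z (deriv g z), mul_assoc, mul_inv_cancel₀ hz, mul_one]
  -- the constant must vanish, via the logarithm on the upper half plane
  have hc0 : c = 0 := by
    by_contra hc
    have habsc : 0 < ‖c‖ := by simpa [norm_pos_iff] using hc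
    set U : Set ℂ := {w : ℂ | 0 < w.im} with hU_def
    have hUconv : Convex ℝ U := convex_halfSpace_im_gt 0
    have huder : ∀ w ∈ U, HasDerivWithinAt (fun z => g z - c * Complex.log z) (0 : ℂ) U w := by
      intro w hw
      have hwim : 0 < w.im := hw
      have hw0 : w ≠ 0 := by
        intro hw0
        rw [hw0] at hwim
        simp at hwim
      have hslit : w ∈ Complex.slitPlane := Complex.mem_slitPlane_iff.mpr (Or.inr hwim.ne')
      have h1 : HasDerivAt g (c * w⁻¹) w := by
        have := (hol w hw0).hasDerivAt
        rwa [hderiv_eq w hw0] at this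
      have h2 : HasDerivAt (fun z => c * Complex.log z) (c * w⁻¹) w :=
        (Complex.hasDerivAt_log hslit).const_mul c
      have h3 := h1.sub h2
      rw [sub_self] at h3
      exact h3.hasDerivWithinAt
    have hconstU : ∀ t : ℝ, 0 < t → g ((t : ℂ) * I) - c * Complex.log ((t : ℂ) * I)
        = g I - c * Complex.log I := by
      intro t ht
      have hmem : ((t : ℂ) * I) ∈ U := by simp [hU_def, ht]
      have hImem : (I : ℂ) ∈ U := by simp [hU_def]
      have := hUconv.norm_image_sub_le_of_norm_hasDerivWithin_le (C := 0) huder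
        (fun z _ => by simp) hImem hmem
      rw [zero_mul] at this
      exact sub_eq_zero.mp (norm_le_zero_iff.mp this)
    set M : ℝ := C + ‖g I‖ + ‖c‖ * ‖Complex.log I‖
      with hM_def
    have hM0 : 0 ≤ M := by positivity
    have hlogbd : ∀ t : ℝ, 1 ≤ t → ‖c‖ * Real.log t ≤ M := by
      intro t ht
      have ht0 : 0 < t := lt_of_lt_of_le one_pos ht
      have habs_tI : ‖(t : ℂ) * I‖ = t := by
        simp [abs_of_pos ht0]
      have him_tI : ((t : ℂ) * I).im = t := by simp
      have hgbd : ‖g ((t : ℂ) * I)‖ ≤ C := by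
        have := hbd ((t : ℂ) * I) (by rw [him_tI]; exact ht0.ne')
        rwa [habs_tI, him_tI, abs_of_pos ht0, mul_div_assoc, div_self ht0.ne',
          mul_one] at this
      have heq := hconstU t ht0
      have h4 : c * Complex.log ((t : ℂ) * I)
          = g ((t : ℂ) * I) - g I + c * Complex.log I := by
        linear_combination -heq
      have h5 : ‖c * Complex.log ((t : ℂ) * I)‖ ≤ M := by
        rw [h4, hM_def]
        calc ‖g ((t : ℂ) * I) - g I + c * Complex.log I‖
            ≤ ‖g ((t : ℂ) * I) - g I‖ + ‖c * Complex.log I‖ :=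
              norm_add_le _ _
          _ ≤ (‖g ((t : ℂ) * I)‖ + ‖g I‖)
              + ‖c‖ * ‖Complex.log I‖ := by
              rw [norm_mul]
              exact add_le_add_left (norm_sub_le _ _) _
          _ ≤ C + ‖g I‖ + ‖c‖ * ‖Complex.log I‖ := by
              linarith [hgbd]
      have h6 : Real.log t ≤ ‖Complex.log ((t : ℂ) * I)‖ := by
        have h7 : (Complex.log ((t : ℂ) * I)).re = Real.log t := by
          rw [Complex.log_re, habs_tI]
        calc Real.log t ≤ |Real.log t| := le_abs_self _
          _ = |(Complex.log ((t : ℂ) * I)).re| := by rw [h7]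
          _ ≤ ‖Complex.log ((t : ℂ) * I)‖ := Complex.abs_re_le_norm _
      calc ‖c‖ * Real.log t ≤ ‖c‖ * ‖Complex.log ((t : ℂ) * I)‖ :=
            mul_le_mul_of_nonneg_left h6 (norm_nonneg _)
        _ = ‖c * Complex.log ((t : ℂ) * I)‖ := (norm_mul _ _).symm
        _ ≤ M := h5
    have hcontr := hlogbd (Real.exp ((M + 1) / ‖c‖))
      (Real.one_le_exp (by positivity))
    rw [Real.log_exp, mul_div_cancel₀ _ habsc.ne'] at hcontr
    linarith
  have hder0 : ∀ z : ℂ, z ≠ 0 → deriv g z = 0 := by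
    intro z hz
    rw [hderiv_eq z hz, hc0, zero_mul]
  -- conclude using convex half-planes covering ℂ ∖ {0}
  have hcU : ∀ {x y : ℂ}, 0 < x.im → 0 < y.im → g x = g y := fun hx hy =>
    constOnConvex g hol hder0 (convex_halfSpace_im_gt 0) (by simp) hx hy
  have hcD : ∀ {x y : ℂ}, x.im < 0 → y.im < 0 → g x = g y := fun hx hy =>
    constOnConvex g hol hder0 (convex_halfSpace_im_lt 0) (by simp) hx hy
  have hcR : ∀ {x y : ℂ}, 0 < x.re → 0 < y.re → g x = g y := fun hx hy =>
    constOnConvex g hol hder0 (convex_halfSpace_re_gt 0) (by simp) hx hy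
  have hcL : ∀ {x y : ℂ}, x.re < 0 → y.re < 0 → g x = g y := fun hx hy =>
    constOnConvex g hol hder0 (convex_halfSpace_re_lt 0) (by simp) hx hy
  have key : ∀ z : ℂ, z ≠ 0 → g z = g 1 := by
    intro z hz
    rcases lt_trichotomy z.re 0 with hre | hre | hre
    · calc g z = g (-1 + I) := hcL hre (by simp)
        _ = g (1 + I) := hcU (by simp) (by simp)
        _ = g 1 := hcR (by simp) (by simp)
    · rcases lt_trichotomy z.im 0 with him | him | him
      · calc g z = g (1 - I) := hcD him (by simp)
          _ = g 1 := hcR (by simp) (by simp)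
      · exact absurd (Complex.ext hre him) hz
      · calc g z = g (1 + I) := hcU him (by simp)
          _ = g 1 := hcR (by simp) (by simp)
    · exact hcR hre (by simp)
  intro z w hz hw
  rw [key z hz, key w hw]
end
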